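/- Let V, W be finite-dimensional complex vector spaces and S ⊆ V ⊗ W a 3-dimensional subspace spanned by three simple tensors v₁ ⊗ w₁, v₂ ⊗ w₂, v₃ ⊗ w₃ such that v₁, v₂, v₃ are linearly independent and w₁, w₂, w₃ are linearly independent. Then the set of simple tensors in S is exactly the union of the three lines ℂ·(v₁ ⊗ w₁) ∪ ℂ·(v₂ ⊗ w₂) ∪ ℂ·(v₃ ⊗ w₃). -/

import Mathlib

open TensorProduct

lemma exists_dual_family {K V : Type*} [Field K] [AddCommGroup V] [Module K V]
    {n : ℕ} {v : Fin n → V} (hv : LinearIndependent K v) :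
    ∃ f : Fin n → (V →ₗ[K] K), ∀ i j, f i (v j) = if i = j then 1 else 0 := by
  let b := Module.Basis.span hv
  have hmem : ∀ j, v j ∈ Submodule.span K (Set.range v) :=
    fun j => Submodule.subset_span ⟨j, rfl⟩
  choose f hf using fun i => LinearMap.exists_extend (b.coord i)
  refine ⟨f, fun i j => ?_⟩
  have h1 : v j = (Submodule.span K (Set.range v)).subtype ⟨v j, hmem j⟩ := rfl
  rw [h1, ← LinearMap.comp_apply, hf i]
  have h2 : (⟨v j, hmem j⟩ : Submodule.span K (Set.range v)) = b j := by
    ext; simp [b, Module.Basis.span_apply]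
  rw [h2, Module.Basis.coord_apply, Module.Basis.repr_self, Finsupp.single_apply]
  simp [eq_comm]

theorem stmt_13 {V W : Type*} [AddCommGroup V] [Module ℂ V] [FiniteDimensional ℂ V]
    [AddCommGroup W] [Module ℂ W] [FiniteDimensional ℂ W]
    (v1 v2 v3 : V) (w1 w2 w3 : W)
    (hv : LinearIndependent ℂ ![v1, v2, v3])
    (hw : LinearIndependent ℂ ![w1, w2, w3]) :
    {t : V ⊗[ℂ] W |
        t ∈ Submodule.span ℂ {v1 ⊗ₜ[ℂ] w1, v2 ⊗ₜ[ℂ] w2, v3 ⊗ₜ[ℂ] w3} ∧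
        ∃ (x : V) (y : W), t = x ⊗ₜ[ℂ] y}
    = {t | ∃ c : ℂ, t = c • (v1 ⊗ₜ[ℂ] w1)} ∪
      {t | ∃ c : ℂ, t = c • (v2 ⊗ₜ[ℂ] w2)} ∪
      {t | ∃ c : ℂ, t = c • (v3 ⊗ₜ[ℂ] w3)} := by
  obtain ⟨f, hf⟩ := exists_dual_family hv
  obtain ⟨g, hg⟩ := exists_dual_family hw
  set e : (V →ₗ[ℂ] ℂ) → (W →ₗ[ℂ] ℂ) → (V ⊗[ℂ] W →ₗ[ℂ] ℂ) :=
    fun φ ψ => (TensorProduct.lid ℂ ℂ).toLinearMap ∘ₗ TensorProduct.map φ ψ with he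
  have hetm : ∀ φ ψ (x : V) (y : W), e φ ψ (x ⊗ₜ[ℂ] y) = φ x * ψ y := by
    intro φ ψ x y
    simp [he, TensorProduct.lid_tmul, smul_eq_mul]
  ext t
  simp only [Set.mem_setOf_eq, Set.mem_union]
  constructor
  · rintro ⟨hmem, x, y, rfl⟩
    rw [Submodule.mem_span_insert] at hmem
    obtain ⟨a, z, hz, heq⟩ := hmem
    rw [Submodule.mem_span_insert] at hz
    obtain ⟨b, z2, hz2, rfl⟩ := hz
    rw [Submodule.mem_span_singleton] at hz2
    obtain ⟨c, rfl⟩ := hz2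
    have key : ∀ i j : Fin 3, f i x * g j y =
        a * ((if i = 0 then (1:ℂ) else 0) * (if j = 0 then (1:ℂ) else 0)) +
        (b * ((if i = 1 then (1:ℂ) else 0) * (if j = 1 then (1:ℂ) else 0)) +
         c * ((if i = 2 then (1:ℂ) else 0) * (if j = 2 then (1:ℂ) else 0))) := by
      intro i j
      have := congrArg (e (f i) (g j)) heq
      simp only [map_add, map_smul, hetm, smul_eq_mul] at this
      have hv1 : f i v1 = if i = 0 then 1 else 0 := by simpa using hf i 0
      have hv2 : f i v2 = if i = 1 then 1 else 0 := by simpa using hf i 1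
      have hv3 : f i v3 = if i = 2 then 1 else 0 := by simpa using hf i 2
      have hw1 : g j w1 = if j = 0 then 1 else 0 := by simpa using hg j 0
      have hw2 : g j w2 = if j = 1 then 1 else 0 := by simpa using hg j 1
      have hw3 : g j w3 = if j = 2 then 1 else 0 := by simpa using hg j 2
      rw [hv1, hv2, hv3, hw1, hw2, hw3] at this
      exact this
    have h00 : f 0 x * g 0 y = a := by simpa using key 0 0
    have h11 : f 1 x * g 1 y = b := by simpa using key 1 1
    have h22 : f 2 x * g 2 y = c := by simpa using key 2 2
    by_cases ha : a = 0
    · by_cases hb : b = 0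
      · right
        exact ⟨c, by rw [heq, ha, hb]; simp⟩
      · left; right
        have hF1 : f 1 x ≠ 0 := fun h => hb (by rw [← h11, h, zero_mul])
        have hG2 : g 2 y = 0 := by
          have := key 1 2
          simp at this
          exact this.resolve_left hF1
        have hc : c = 0 := by rw [← h22, hG2, mul_zero]
        exact ⟨b, by rw [heq, ha, hc]; simp⟩
    · left; left
      have hF0 : f 0 x ≠ 0 := fun h => ha (by rw [← h00, h, zero_mul])
      have hG1 : g 1 y = 0 := by
        have := key 0 1
        simp at this
        exact this.resolve_left hF0
      have hG2 : g 2 y = 0 := by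
        have := key 0 2
        simp at this
        exact this.resolve_left hF0
      have hb : b = 0 := by rw [← h11, hG1, mul_zero]
      have hc : c = 0 := by rw [← h22, hG2, mul_zero]
      exact ⟨a, by rw [heq, hb, hc]; simp⟩
  · rintro ((⟨c, rfl⟩ | ⟨c, rfl⟩) | ⟨c, rfl⟩) <;>
      refine ⟨Submodule.smul_mem _ _ (Submodule.subset_span (by simp)), ?_⟩
    · exact ⟨c • v1, w1, by rw [smul_tmul']⟩
    · exact ⟨c • v2, w2, by rw [smul_tmul']⟩
    · exact ⟨c • v3, w3, by rw [smul_tmul']⟩
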